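/- Let n ≥ 1, let c ∈ ℂ and R > 0, and let A be an n×n complex matrix whose spectrum is contained in the open ball of center c and radius R. Let f : ℂ → ℂ be differentiable on the open ball of center c and radius R and continuous on the closed ball. Then (2πi)⁻¹ • ∮_{|σ−c|=R} conj(f(σ)) • (σ•1 − A)⁻¹ dσ = conj(f(c)) • 1, where the integral is the circle integral over the circle of center c and radius R, taken in the space of n×n complex matrices, and 1 is the identity matrix. -/

import Mathlib

open Matrix MeasureTheory Complex
open scoped Real

attribute [local instance] Matrix.normedAddCommGroup Matrix.normedSpace

/-- If `f` is complex differentiable at the reflected point, then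
`w ↦ conj (f (c + conj (w - c)))` is complex differentiable. -/
theorem conj_comp_hasDerivAt' {f : ℂ → ℂ} {f' z c : ℂ}
    (hf : HasDerivAt f f' (c + (starRingEnd ℂ) (z - c))) :
    HasDerivAt (fun w => (starRingEnd ℂ) (f (c + (starRingEnd ℂ) (w - c))))
      ((starRingEnd ℂ) f') z := by
  set g : ℂ → ℂ := fun w => c + (starRingEnd ℂ) (w - c) with hg
  have hgc : Continuous g :=
    continuous_const.add (Complex.continuous_conj.comp (continuous_id.sub continuous_const))
  have hginj : Function.Injective g := by
    intro a b hab
    have h1 : (starRingEnd ℂ) (a - c) = (starRingEnd ℂ) (b - c) := by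
      simpa [g] using hab
    have h2 := star_injective h1
    linear_combination h2
  rw [hasDerivAt_iff_tendsto_slope] at hf ⊢
  have hslope : ∀ w, slope (fun w => (starRingEnd ℂ) (f (g w))) z w
      = (starRingEnd ℂ) (slope f (g z) (g w)) := by
    intro w
    have e1 : g w - g z = (starRingEnd ℂ) (w - z) := by
      simp only [g]
      rw [add_sub_add_left_eq_sub, ← map_sub]
      ring_nf
    rw [slope_def_field, slope_def_field, e1, map_div₀, ← map_sub, Complex.conj_conj]
  have h1 : Filter.Tendsto g (nhdsWithin z {z}ᶜ) (nhdsWithin (g z) {g z}ᶜ) := by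
    refine (hgc.continuousWithinAt).tendsto_nhdsWithin ?_
    intro w hw hw2
    exact hw (hginj hw2)
  exact Filter.Tendsto.congr (fun w => (hslope w).symm)
    (((Complex.continuous_conj.tendsto f').comp hf).comp h1)

theorem det_differentiableAt' {n : ℕ} {M : ℂ → Matrix (Fin n) (Fin n) ℂ} {z : ℂ}
    (h : ∀ i j, DifferentiableAt ℂ (fun z => M z i j) z) :
    DifferentiableAt ℂ (fun z => (M z).det) z := by
  simp only [Matrix.det_apply]
  refine DifferentiableAt.fun_sum fun σ _ => ?_
  simp only [Units.smul_def, zsmul_eq_mul]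
  exact (differentiableAt_const _).mul (DifferentiableAt.fun_finsetProd fun i _ => h _ _)

theorem inv_differentiableAt' {n : ℕ} {M : ℂ → Matrix (Fin n) (Fin n) ℂ} {z : ℂ}
    (h : ∀ i j, DifferentiableAt ℂ (fun z => M z i j) z)
    (hdet : (M z).det ≠ 0) :
    DifferentiableAt ℂ (fun z => (M z)⁻¹) z := by
  have heq : (fun z => (M z)⁻¹) = fun z => ((M z).det)⁻¹ • (M z).adjugate := by
    funext w
    rw [Matrix.inv_def, Ring.inverse_eq_inv']
  rw [heq]
  refine DifferentiableAt.smul ((det_differentiableAt' h).inv hdet) ?_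
  refine differentiableAt_pi.mpr ?_
  intro i
  refine differentiableAt_pi.mpr ?_
  intro j
  have h2 : (fun z => (M z).adjugate i j) = fun z => ((M z).updateRow j (Pi.single i 1)).det := by
    funext w; rw [Matrix.adjugate_apply]
  rw [h2]
  refine det_differentiableAt' fun k l => ?_
  simp only [Matrix.updateRow_apply]
  by_cases hk : k = j <;> simp [hk, h]

theorem smul_matrix_inv' {n : ℕ} {w : ℂ} (hw : w ≠ 0) {M : Matrix (Fin n) (Fin n) ℂ}
    (h : IsUnit M.det) : (w • M)⁻¹ = w⁻¹ • M⁻¹ :=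
  Matrix.inv_eq_left_inv (by
    rw [Matrix.smul_mul, Matrix.mul_smul, smul_smul, inv_mul_cancel₀ hw, one_smul,
      Matrix.nonsing_inv_mul _ h])

theorem cauchy_transform_matrix_eq_conj_center_smul_one
    {n : ℕ} (hn : 1 ≤ n) (c : ℂ) (R : ℝ) (hR : 0 < R)
    (A : Matrix (Fin n) (Fin n) ℂ)
    (hspec : spectrum ℂ A ⊆ Metric.ball c R)
    (f : ℂ → ℂ)
    (hf : DifferentiableOn ℂ f (Metric.ball c R))
    (hfc : ContinuousOn f (Metric.closedBall c R)) :
    (2 * (π : ℂ) * I)⁻¹ •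
      (∮ σ in C(c, R), (starRingEnd ℂ) (f σ) •
        (σ • (1 : Matrix (Fin n) (Fin n) ℂ) - A)⁻¹) =
    (starRingEnd ℂ) (f c) • (1 : Matrix (Fin n) (Fin n) ℂ) := by
  have hRC : (R : ℂ) ≠ 0 := Complex.ofReal_ne_zero.mpr hR.ne'
  set B : Matrix (Fin n) (Fin n) ℂ := A - c • 1 with hB
  clear_value B
  -- Key: `v • 1 - B` is invertible for `R ≤ ‖v‖`.
  have key : ∀ v : ℂ, R ≤ ‖v‖ → IsUnit (v • (1 : Matrix (Fin n) (Fin n) ℂ) - B) := by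
    intro v hv
    by_contra hvu
    have hvmem : v + c ∈ spectrum ℂ A := by
      rw [spectrum.mem_iff, Algebra.algebraMap_eq_smul_one]
      have e : (v + c) • (1 : Matrix (Fin n) (Fin n) ℂ) - A
          = v • (1 : Matrix (Fin n) (Fin n) ℂ) - B := by
        rw [hB, add_smul]; abel
      rw [e]; exact hvu
    have h2 := hspec hvmem
    rw [Metric.mem_ball, dist_eq_norm, add_sub_cancel_right] at h2
    linarith
  -- Key2: `1 - u • B` has invertible determinant for `‖u‖ * R ≤ 1`.
  have key2 : ∀ u : ℂ, ‖u‖ * R ≤ 1 →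
      IsUnit ((1 : Matrix (Fin n) (Fin n) ℂ) - u • B).det := by
    intro u hu
    rcases eq_or_ne u 0 with rfl | hu0
    · simp
    have h0 : 0 < ‖u‖ := norm_pos_iff.mpr hu0
    have hinv : R ≤ ‖u⁻¹‖ := by
      rw [norm_inv, ← one_div]
      exact (le_div_iff₀ h0).mpr (by linarith)
    have e : (1 : Matrix (Fin n) (Fin n) ℂ) - u • B
        = u • (u⁻¹ • (1 : Matrix (Fin n) (Fin n) ℂ) - B) := by
      rw [smul_sub, smul_smul, mul_inv_cancel₀ hu0, one_smul]
    rw [e, Matrix.det_smul]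
    exact (IsUnit.pow _ (Ne.isUnit hu0)).mul
      ((Matrix.isUnit_iff_isUnit_det _).mp (key _ hinv))
  set u : ℂ → ℂ := fun z => (z - c) / (R : ℂ) ^ 2 with hu_def
  set g : ℂ → ℂ := fun z => (starRingEnd ℂ) (f (c + (starRingEnd ℂ) (z - c))) with hg_def
  set F : ℂ → Matrix (Fin n) (Fin n) ℂ :=
    fun z => g z • ((1 : Matrix (Fin n) (Fin n) ℂ) - u z • B)⁻¹ with hF_def
  have hunorm : ∀ z ∈ Metric.closedBall c R, ‖u z‖ * R ≤ 1 := by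
    intro z hz
    rw [Metric.mem_closedBall, dist_eq_norm] at hz
    have : ‖u z‖ = ‖z - c‖ / R ^ 2 := by
      simp [hu_def, norm_div, abs_of_pos hR]
    rw [this]
    rw [div_mul_eq_mul_div, div_le_one (by positivity)]
    nlinarith
  have hdet : ∀ z ∈ Metric.closedBall c R,
      ((1 : Matrix (Fin n) (Fin n) ℂ) - u z • B).det ≠ 0 :=
    fun z hz => (key2 _ (hunorm z hz)).ne_zero
  have hmapsto : ∀ r : ℝ, ∀ z ∈ Metric.closedBall c r,
      c + (starRingEnd ℂ) (z - c) ∈ Metric.closedBall c r := by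
    intro r z hz
    rw [Metric.mem_closedBall, dist_eq_norm] at hz ⊢
    rwa [add_sub_cancel_left, RCLike.norm_conj]
  -- F is differentiable on the open ball, continuous on the closed ball.
  have hFd : DiffContOnCl ℂ F (Metric.ball c R) := by
    constructor
    · intro z hz
      apply DifferentiableAt.differentiableWithinAt
      apply DifferentiableAt.fun_smul
      · have hz' : c + (starRingEnd ℂ) (z - c) ∈ Metric.ball c R := by
          rw [Metric.mem_ball, dist_eq_norm] at hz ⊢
          rwa [add_sub_cancel_left, RCLike.norm_conj]
        exact (conj_comp_hasDerivAt'
          (hf.differentiableAt (Metric.isOpen_ball.mem_nhds hz')).hasDerivAt).differentiableAt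
      · refine inv_differentiableAt' (fun i j => ?_)
          (hdet z (Metric.ball_subset_closedBall hz))
        simp only [Matrix.sub_apply, Matrix.smul_apply, smul_eq_mul]
        exact (differentiableAt_const _).sub
          ((((differentiableAt_id.sub (differentiableAt_const _)).div
            (differentiableAt_const _) (pow_ne_zero 2 hRC)).mul (differentiableAt_const _)))
    · rw [closure_ball c hR.ne']
      apply ContinuousOn.fun_smul
      · exact Complex.continuous_conj.comp_continuousOn
          ((hfc.comp (continuous_const.add (Complex.continuous_conj.comp
            (continuous_id.sub continuous_const))).continuousOn) (hmapsto R))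
      · have hMc : Continuous (fun z => (1 : Matrix (Fin n) (Fin n) ℂ) - u z • B) := by
          refine continuous_pi fun i => continuous_pi fun j => ?_
          simp only [Matrix.sub_apply, Matrix.smul_apply, smul_eq_mul]
          exact continuous_const.sub
            (((continuous_id.sub continuous_const).div_const _).mul continuous_const)
        have heq : (fun z => ((1 : Matrix (Fin n) (Fin n) ℂ) - u z • B)⁻¹)
            = fun z => (((1 : Matrix (Fin n) (Fin n) ℂ) - u z • B).det)⁻¹ •
                ((1 : Matrix (Fin n) (Fin n) ℂ) - u z • B).adjugate := by
          funext w
          rw [Matrix.inv_def, Ring.inverse_eq_inv']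
        rw [heq]
        exact (hMc.matrix_det.continuousOn.inv₀ hdet).smul
          hMc.matrix_adjugate.continuousOn
  -- Cauchy integral formula for F
  have cauchy := hFd.two_pi_i_inv_smul_circleIntegral_sub_inv_smul (Metric.mem_ball_self hR)
  have hFc : F c = (starRingEnd ℂ) (f c) • (1 : Matrix (Fin n) (Fin n) ℂ) := by
    simp [hF_def, hg_def, hu_def]
  -- substitution θ ↦ -θ turns the original integral into the Cauchy one
  have subst : (∮ σ in C(c, R), (starRingEnd ℂ) (f σ) •
        (σ • (1 : Matrix (Fin n) (Fin n) ℂ) - A)⁻¹)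
      = ∮ z in C(c, R), (z - c)⁻¹ • F z := by
    rw [circleIntegral, circleIntegral]
    set p : ℝ → Matrix (Fin n) (Fin n) ℂ := fun θ =>
      deriv (circleMap c R) θ • ((starRingEnd ℂ) (f (circleMap c R θ)) •
        (circleMap c R θ • (1 : Matrix (Fin n) (Fin n) ℂ) - A)⁻¹) with hp_def
    have hper : Function.Periodic p (2 * π) := by
      intro θ
      simp only [hp_def, deriv_circleMap, periodic_circleMap c R θ, periodic_circleMap 0 R θ]
    have hpoint : ∀ θ : ℝ, deriv (circleMap c R) θ •
        ((circleMap c R θ - c)⁻¹ • F (circleMap c R θ)) = p (-θ) := by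
      intro θ
      have hzne : circleMap 0 R θ ≠ 0 := circleMap_ne_center hR.ne'
      have hwne : circleMap 0 R (-θ) ≠ 0 := circleMap_ne_center hR.ne'
      have hconj : (starRingEnd ℂ) (circleMap 0 R θ) = circleMap 0 R (-θ) := by
        simp [circleMap, ← Complex.exp_conj, Complex.conj_I, Complex.conj_ofReal,
          Complex.ofReal_neg, neg_mul]
      have hmul : circleMap 0 R (-θ) * circleMap 0 R θ = (R : ℂ) ^ 2 := by
        simp only [circleMap, zero_add]
        rw [mul_mul_mul_comm, ← Complex.exp_add]
        push_cast
        ring_nf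
        rw [Complex.exp_zero, mul_one]
      have huw : u (circleMap c R θ) = (circleMap 0 R (-θ))⁻¹ := by
        rw [hu_def]
        simp only [circleMap_sub_center]
        rw [inv_eq_of_mul_eq_one_right]
        rw [mul_div_assoc']  -- w * z / R^2
        rw [hmul]
        exact div_self (pow_ne_zero 2 hRC)
      have hcenter : circleMap c R (-θ) = c + circleMap 0 R (-θ) := by
        simp [circleMap]
      have hgz : g (circleMap c R θ) = (starRingEnd ℂ) (f (circleMap c R (-θ))) := by
        rw [hg_def]
        simp only [circleMap_sub_center, hconj, hcenter]
      have hAB : circleMap c R (-θ) • (1 : Matrix (Fin n) (Fin n) ℂ) - A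
          = circleMap 0 R (-θ) • (1 : Matrix (Fin n) (Fin n) ℂ) - B := by
        rw [hcenter, hB, add_smul]; abel
      have hBinv : (circleMap 0 R (-θ) • (1 : Matrix (Fin n) (Fin n) ℂ) - B)⁻¹
          = (circleMap 0 R (-θ))⁻¹ •
            ((1 : Matrix (Fin n) (Fin n) ℂ) - (circleMap 0 R (-θ))⁻¹ • B)⁻¹ := by
        have e : circleMap 0 R (-θ) • (1 : Matrix (Fin n) (Fin n) ℂ) - B
            = circleMap 0 R (-θ) •
              ((1 : Matrix (Fin n) (Fin n) ℂ) - (circleMap 0 R (-θ))⁻¹ • B) := by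
          rw [smul_sub, smul_smul, mul_inv_cancel₀ hwne, one_smul]
        rw [e, smul_matrix_inv' hwne]
        rw [← huw]
        exact key2 _ (hunorm _ (circleMap_mem_closedBall c hR.le θ))
      rw [hp_def]
      simp only [deriv_circleMap, circleMap_sub_center, hF_def, hgz, huw, hAB, hBinv]
      simp only [smul_smul]
      congr 1
      field_simp
    calc (∫ θ in (0 : ℝ)..2 * π, deriv (circleMap c R) θ •
            ((starRingEnd ℂ) (f (circleMap c R θ)) •
              (circleMap c R θ • (1 : Matrix (Fin n) (Fin n) ℂ) - A)⁻¹))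
        = ∫ θ in (0 : ℝ)..2 * π, p θ := by rfl
      _ = ∫ θ in (-(2 * π) : ℝ)..(-(2 * π) + 2 * π), p θ := by
          rw [hper.intervalIntegral_add_eq (-(2 * π)) 0]
          norm_num
      _ = ∫ θ in (0 : ℝ)..2 * π, p (-θ) := by
          rw [intervalIntegral.integral_comp_neg p]
          norm_num
      _ = ∫ θ in (0 : ℝ)..2 * π, deriv (circleMap c R) θ •
            ((circleMap c R θ - c)⁻¹ • F (circleMap c R θ)) := by
          refine intervalIntegral.integral_congr fun θ _ => ?_
          exact hpoint θ
    |>.symm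
  rw [subst, cauchy, hFc]
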